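/- Let F be a field with at least 4 elements and let A be a matrix over F such that the matroid M(A) has branch-width a ≥ 1. Then the matroid M(d⁺(A)) has branch-width at most a + 1. -/

import Mathlib

/-- A branch-decomposition of a ground set `E`: a subcubic tree together with a
bijection from `E` to the leaves of the tree. -/
structure BranchDecomp (E : Type*) where
  V : Type
  [fV : Fintype V]
  G : SimpleGraph V
  [dA : DecidableRel G.Adj]
  isTree : G.IsTree
  subcubic : ∀ v : V, G.degree v = 1 ∨ G.degree v = 3
  L : E ≃ {v : V // G.degree v = 1}

attribute [instance] BranchDecomp.fV BranchDecomp.dA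

/-- The side of the edge `{u,v}` containing `u`: those elements of `E` whose leaf is
reachable from `u` after deleting the edge. -/
def BranchDecomp.side {E : Type*} (D : BranchDecomp E) (u v : D.V) : Set E :=
  {x : E | (D.G.deleteEdges {s(u, v)}).Reachable u (D.L x).1}

/-- The width of a branch-decomposition with respect to a set function `lam`. -/
noncomputable def BranchDecomp.width {E : Type*} (D : BranchDecomp E)
    (lam : Set E → ℕ) : ℕ :=
  Finset.sup (Finset.univ.filter fun p : D.V × D.V => D.G.Adj p.1 p.2)
    (fun p => lam (D.side p.1 p.2))

/-- The branch-width of a set function `lam : Set E → ℕ`. -/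
noncomputable def branchWidth {E : Type*} (lam : Set E → ℕ) : ℕ :=
  if Nat.card E ≤ 1 then 0
  else sInf {w | ∃ D : BranchDecomp E, D.width lam = w}

/-- The path-width of a set function `lam : Set E → ℕ` : the minimum over linear layouts
of the maximum of `lam` on proper prefixes. -/
noncomputable def pathWidth (E : Type*) [Fintype E] (lam : Set E → ℕ) : ℕ :=
  if Fintype.card E ≤ 1 then 0
  else sInf {w | ∃ f : Fin (Fintype.card E) ≃ E,
    (Finset.sup (Finset.univ.filter fun i : Fin (Fintype.card E) =>
        (i : ℕ) < Fintype.card E - 1)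
      (fun i => lam {x | f.symm x ≤ i})) = w}

/-- `lam` is a connectivity function: symmetric, submodular, zero on the empty set. -/
structure IsConnFn {E : Type*} (lam : Set E → ℕ) : Prop where
  symm : ∀ X, lam X = lam Xᶜ
  submod : ∀ X Y, lam (X ∩ Y) + lam (X ∪ Y) ≤ lam X + lam Y
  empty : lam ∅ = 0

/-- The rank of the set `X` of columns of the matrix `A`. -/
noncomputable def colRank {m E F : Type*} [Fintype m] [Field F]
    (A : Matrix m E F) (X : Set E) : ℕ :=
  Module.finrank F (Submodule.span F (Matrix.transpose A '' X))

/-- The connectivity function of the matroid represented by the columns of `A`. -/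
noncomputable def matLam {m E F : Type*} [Fintype m] [Field F]
    (A : Matrix m E F) (X : Set E) : ℕ :=
  colRank A X + colRank A Xᶜ - colRank A Set.univ

/-- The branch-width of the matroid represented by the columns of `A`. -/
noncomputable def matBW {m E F : Type*} [Fintype m] [Field F]
    (A : Matrix m E F) : ℕ :=
  branchWidth (matLam A)

/-- A matrix represents a simple matroid iff it has no zero column and no two
distinct columns are linearly dependent. -/
def SimpleRep {m n F : Type*} [Field F] (A : Matrix m n F) : Prop :=
  (∀ j, Matrix.transpose A j ≠ 0) ∧
    ∀ j j' : n, j ≠ j' → ∀ c : F, Matrix.transpose A j ≠ c • Matrix.transpose A j'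

open scoped Classical in
/-- The cut-rank of a set `X` for a square matrix `A`: the rank of the submatrix with
rows in `X` and columns in the complement of `X`. -/
noncomputable def cutRank {E F : Type*} [Fintype E] [Field F]
    (A : Matrix E E F) (X : Set E) : ℕ :=
  (A.submatrix (fun x : X => (x : E)) (fun y : ↥Xᶜ => (y : E))).rank

/-- `d⁺(A)`: four side-by-side copies of `A` with one extra row taking the values
`α`, `β`, `γ`, `δ` on the four respective blocks of columns. -/
def dPlus {m n F : Type*} (α β γ δ : F) (A : Matrix m n F) :
    Matrix (Option m) (Fin 4 × n) F :=
  fun i p => Option.elim i (![α, β, γ, δ] p.1) (fun i' => A i' p.2)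

section Rank
variable {m n F : Type*} [Fintype m] [Field F]

/-- embed `F^m` into `F^(Option m)` with `none`-coordinate zero. -/
def iotaL (m F : Type*) [Field F] : (m → F) →ₗ[F] (Option m → F) where
  toFun v := fun o => Option.elim o 0 v
  map_add' u v := by funext o; cases o <;> simp
  map_smul' c v := by funext o; cases o <;> simp

def eZero (m F : Type*) [Field F] : Option m → F := fun o => Option.elim o 1 (fun _ => 0)

lemma eZero_ne_zero : eZero m F ≠ 0 := by
  intro h
  have := congrFun h none
  simp [eZero] at this

lemma dPlus_col (α β γ δ : F) (A : Matrix m n F) (p : Fin 4 × n) :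
    (dPlus α β γ δ A).transpose p
      = iotaL m F (A.transpose p.2) + (![α, β, γ, δ] p.1) • eZero m F := by
  funext o
  cases o <;> simp [dPlus, Matrix.transpose, iotaL, eZero]

lemma iotaL_inj : Function.Injective (iotaL m F) := by
  intro u v h
  funext i
  exact congrFun h (some i)

lemma colRank_hat_le (α β γ δ : F) (A : Matrix m n F) (S : Set n) :
    colRank (dPlus α β γ δ A) {p | p.2 ∈ S} ≤ colRank A S + 1 := by
  classical
  have hle : Submodule.span F ((dPlus α β γ δ A).transpose '' {p | p.2 ∈ S})
      ≤ (Submodule.span F (A.transpose '' S)).map (iotaL m F) ⊔ (F ∙ eZero m F) := by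
    rw [Submodule.span_le]
    rintro _ ⟨⟨k, x⟩, hx, rfl⟩
    rw [dPlus_col]
    refine add_mem (Submodule.mem_sup_left ?_) (Submodule.mem_sup_right ?_)
    · exact Submodule.mem_map_of_mem (Submodule.subset_span ⟨x, hx, rfl⟩)
    · exact Submodule.smul_mem _ _ (Submodule.mem_span_singleton_self _)
  calc colRank (dPlus α β γ δ A) {p | p.2 ∈ S}
      ≤ Module.finrank F ↥((Submodule.span F (A.transpose '' S)).map (iotaL m F)
          ⊔ (F ∙ eZero m F)) := Submodule.finrank_mono hle
    _ ≤ Module.finrank F ↥((Submodule.span F (A.transpose '' S)).map (iotaL m F))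
          + Module.finrank F ↥(F ∙ eZero m F) :=
        Submodule.finrank_add_le_finrank_add_finrank _ _
    _ ≤ colRank A S + 1 := by
        have h1 := Submodule.finrank_map_le (iotaL m F) (Submodule.span F (A.transpose '' S))
        have h2 : Module.finrank F ↥(F ∙ eZero m F) = 1 :=
          finrank_span_singleton (eZero_ne_zero)
        rw [h2]; exact Nat.add_le_add h1 le_rfl
lemma colRank_univ_ge (α β γ δ : F) (hab : α ≠ β) (A : Matrix m n F) (x₀ : n) :
    colRank A Set.univ + 1 ≤ colRank (dPlus α β γ δ A) Set.univ := by
  classical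
  set B := dPlus α β γ δ A with hB
  set W := Submodule.span F (B.transpose '' Set.univ) with hW
  have he0 : eZero m F ∈ W := by
    have h0 : B.transpose (0, x₀) ∈ W := Submodule.subset_span ⟨(0, x₀), trivial, rfl⟩
    have h1 : B.transpose (1, x₀) ∈ W := Submodule.subset_span ⟨(1, x₀), trivial, rfl⟩
    have hdiff : B.transpose (0, x₀) - B.transpose (1, x₀) = (α - β) • eZero m F := by
      rw [hB, dPlus_col, dPlus_col]
      simp [sub_smul]
    have : (α - β) • eZero m F ∈ W := hdiff ▸ sub_mem h0 h1
    have := Submodule.smul_mem W (α - β)⁻¹ this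
    rwa [smul_smul, inv_mul_cancel₀ (sub_ne_zero.mpr hab), one_smul] at this
  have hiota : ∀ y : n, iotaL m F (A.transpose y) ∈ W := by
    intro y
    have hc : B.transpose (0, y) ∈ W := Submodule.subset_span ⟨(0, y), trivial, rfl⟩
    have : B.transpose (0, y) - (![α, β, γ, δ] 0) • eZero m F = iotaL m F (A.transpose y) := by
      rw [hB, dPlus_col]; abel
    exact this ▸ sub_mem hc (Submodule.smul_mem W _ he0)
  have hle : (Submodule.span F (A.transpose '' Set.univ)).map (iotaL m F)
      ⊔ (F ∙ eZero m F) ≤ W := by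
    refine sup_le ?_ ?_
    · rw [Submodule.map_span, Submodule.span_le]
      rintro _ ⟨_, ⟨y, _, rfl⟩, rfl⟩
      exact hiota y
    · rw [Submodule.span_singleton_le_iff_mem]; exact he0
  have hinf : (Submodule.span F (A.transpose '' Set.univ)).map (iotaL m F)
      ⊓ (F ∙ eZero m F) = ⊥ := by
    rw [eq_bot_iff]
    rintro v ⟨⟨w, _, rfl⟩, hv2⟩
    obtain ⟨c, hc⟩ := Submodule.mem_span_singleton.mp hv2
    have : c = 0 := by
      simpa [iotaL, eZero] using congrFun hc none
    subst this
    simp at hc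
    simp [← hc]
  have hrank : Module.finrank F ↥((Submodule.span F (A.transpose '' Set.univ)).map (iotaL m F)
      ⊔ (F ∙ eZero m F)) = colRank A Set.univ + 1 := by
    have := Submodule.finrank_sup_add_finrank_inf_eq
      ((Submodule.span F (A.transpose '' Set.univ)).map (iotaL m F)) (F ∙ eZero m F)
    rw [hinf, finrank_bot, add_zero] at this
    rw [this, finrank_span_singleton (eZero_ne_zero)]
    congr 1
    exact LinearEquiv.finrank_eq
      (Submodule.equivMapOfInjective _ iotaL_inj (Submodule.span F (A.transpose '' Set.univ))).symm
  calc colRank A Set.univ + 1 = _ := hrank.symm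
    _ ≤ colRank B Set.univ := Submodule.finrank_mono hle

lemma colRank_union_le (A : Matrix m n F) (S : Set n) :
    colRank A Set.univ ≤ colRank A S + colRank A Sᶜ := by
  classical
  have h : Submodule.span F (A.transpose '' Set.univ)
      ≤ Submodule.span F (A.transpose '' S) ⊔ Submodule.span F (A.transpose '' Sᶜ) := by
    rw [← Submodule.span_union]
    refine Submodule.span_mono ?_
    rintro _ ⟨x, -, rfl⟩
    by_cases hx : x ∈ S
    exacts [Or.inl ⟨x, hx, rfl⟩, Or.inr ⟨x, hx, rfl⟩]
  calc colRank A Set.univ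
      ≤ Module.finrank F ↥(Submodule.span F (A.transpose '' S)
          ⊔ Submodule.span F (A.transpose '' Sᶜ)) := Submodule.finrank_mono h
    _ ≤ _ := Submodule.finrank_add_le_finrank_add_finrank _ _

lemma colRank_mono (A : Matrix m n F) {S T : Set n} (h : S ⊆ T) :
    colRank A S ≤ colRank A T :=
  Submodule.finrank_mono (Submodule.span_mono (Set.image_mono h))

lemma colRank_small (α β γ δ : F) (A : Matrix m n F) (x : n)
    {X : Set (Fin 4 × n)} (hX : X ⊆ {p | p.2 = x}) :
    colRank (dPlus α β γ δ A) X ≤ 2 := by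
  classical
  have hle : Submodule.span F ((dPlus α β γ δ A).transpose '' X)
      ≤ (F ∙ iotaL m F (A.transpose x)) ⊔ (F ∙ eZero m F) := by
    rw [Submodule.span_le]
    rintro _ ⟨⟨k, y⟩, hy, rfl⟩
    have : y = x := hX hy
    subst this
    rw [dPlus_col]
    exact add_mem (Submodule.mem_sup_left (Submodule.mem_span_singleton_self _))
      (Submodule.mem_sup_right (Submodule.smul_mem _ _ (Submodule.mem_span_singleton_self _)))
  calc colRank (dPlus α β γ δ A) X
      ≤ Module.finrank F ↥((F ∙ iotaL m F (A.transpose x)) ⊔ (F ∙ eZero m F)) :=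
        Submodule.finrank_mono hle
    _ ≤ Module.finrank F ↥(F ∙ iotaL m F (A.transpose x)) + Module.finrank F ↥(F ∙ eZero m F) :=
        Submodule.finrank_add_le_finrank_add_finrank _ _
    _ ≤ 2 := by
        have h1 : Module.finrank F ↥(F ∙ iotaL m F (A.transpose x)) ≤ 1 := by
          simpa using finrank_span_le_card ({iotaL m F (A.transpose x)} : Set (Option m → F))
        have h2 : Module.finrank F ↥(F ∙ eZero m F) ≤ 1 := by
          simpa using finrank_span_le_card ({eZero m F} : Set (Option m → F))
        omega

lemma matLam_compl {E : Type*} (B : Matrix m E F) (X : Set E) :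
    matLam B Xᶜ = matLam B X := by
  unfold matLam
  rw [compl_compl, Nat.add_comm]

lemma matLam_le_colRank {E : Type*} (B : Matrix m E F) (X : Set E) :
    matLam B X ≤ colRank B X := by
  have := colRank_mono B (Set.subset_univ Xᶜ)
  unfold matLam
  omega

lemma matLam_hat (α β γ δ : F) (hab : α ≠ β) (A : Matrix m n F) (x₀ : n) (S : Set n) :
    matLam (dPlus α β γ δ A) {p | p.2 ∈ S} ≤ matLam A S + 1 := by
  have hcompl : {p : Fin 4 × n | p.2 ∈ S}ᶜ = {p : Fin 4 × n | p.2 ∈ Sᶜ} := rfl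
  have h1 := colRank_hat_le α β γ δ A S
  have h2 := colRank_hat_le α β γ δ A Sᶜ
  have h3 := colRank_univ_ge α β γ δ hab A x₀
  have h4 := colRank_union_le A S
  unfold matLam
  rw [hcompl]
  omega

end Rank
section GraphHelpers
open SimpleGraph

lemma walk_closed {V : Type*} {G : SimpleGraph V} {P : Set V}
    (hP : ∀ a b, G.Adj a b → a ∈ P → b ∈ P) :
    ∀ {u v : V}, G.Walk u v → u ∈ P → v ∈ P
  | _, _, SimpleGraph.Walk.nil, hu => hu
  | _, _, SimpleGraph.Walk.cons h p, hu => walk_closed hP p (hP _ _ h hu)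

lemma reach_closed {V : Type*} {G : SimpleGraph V} {P : Set V}
    (hP : ∀ a b, G.Adj a b → a ∈ P → b ∈ P) {u v : V} (h : G.Reachable u v)
    (hu : u ∈ P) : v ∈ P := by
  obtain ⟨p⟩ := h
  exact walk_closed hP p hu

lemma reach_or {V : Type*} {G : SimpleGraph V} {u v : V} (huv : G.Adj u v) {w : V}
    (h : G.Reachable u w) :
    (G.deleteEdges {s(u, v)}).Reachable u w ∨ (G.deleteEdges {s(u, v)}).Reachable v w := by
  set H := G.deleteEdges {s(u, v)} with hH
  have hP : ∀ a b, G.Adj a b → (H.Reachable u a ∨ H.Reachable v a)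
      → (H.Reachable u b ∨ H.Reachable v b) := by
    intro a b hab hmem
    by_cases he : s(a, b) = s(u, v)
    · rw [Sym2.eq_iff] at he
      rcases he with ⟨rfl, rfl⟩ | ⟨rfl, rfl⟩
      · right; exact Reachable.refl _
      · left; exact Reachable.refl _
    · have hHab : H.Adj a b := by
        rw [hH, SimpleGraph.deleteEdges_adj]
        exact ⟨hab, by simpa using he⟩
      rcases hmem with h' | h'
      · left; exact h'.trans hHab.reachable
      · right; exact h'.trans hHab.reachable
  exact reach_closed (P := {a | H.Reachable u a ∨ H.Reachable v a}) hP h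
    (Or.inl (Reachable.refl _))

lemma BranchDecomp.bridge {E : Type*} (D : BranchDecomp E) {u v : D.V}
    (huv : D.G.Adj u v) : ¬ (D.G.deleteEdges {s(u, v)}).Reachable u v :=
  (SimpleGraph.isBridge_iff.mp
    (SimpleGraph.isAcyclic_iff_forall_adj_isBridge.mp D.isTree.IsAcyclic huv))

lemma BranchDecomp.side_compl {E : Type*} (D : BranchDecomp E) {u v : D.V}
    (huv : D.G.Adj u v) : D.side v u = (D.side u v)ᶜ := by
  ext x
  simp only [BranchDecomp.side, Set.mem_setOf_eq, Set.mem_compl_iff]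
  have hswap : s(v, u) = s(u, v) := Sym2.eq_swap
  rw [hswap]
  constructor
  · intro hv hu
    exact D.bridge huv (hu.trans hv.symm)
  · intro hnu
    have hreach : D.G.Reachable u (D.L x).1 :=
      D.isTree.isConnected.preconnected u _
    rcases reach_or huv hreach with h | h
    · exact absurd h hnu
    · exact h

end GraphHelpers
section Construct
open SimpleGraph

variable {n : Type*} (D : BranchDecomp n)

/-- The leaf type of `D`. -/
abbrev BranchDecomp.Leaf := {v : D.V // D.G.degree v = 1}

/-- Vertex set of the enlarged tree. -/
abbrev bigV := D.V ⊕ (D.Leaf × Fin 6)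

def gAdj : bigV D → bigV D → Prop
  | Sum.inl a, Sum.inl b => D.G.Adj a b
  | Sum.inl a, Sum.inr (x, i) => a = x.1 ∧ (i.val = 0 ∨ i.val = 1)
  | Sum.inr (x, i), Sum.inl a => a = x.1 ∧ (i.val = 0 ∨ i.val = 1)
  | Sum.inr (x, i), Sum.inr (y, j) => x = y ∧
      (j.val = 2 * i.val + 2 ∨ j.val = 2 * i.val + 3 ∨
       i.val = 2 * j.val + 2 ∨ i.val = 2 * j.val + 3)

def bigG : SimpleGraph (bigV D) where
  Adj := gAdj D
  symm := by
    refine ⟨?_⟩; rintro (a | ⟨x, i⟩) (b | ⟨y, j⟩) h <;> simp only [gAdj] at h ⊢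
    · exact h.symm
    · exact h
    · exact h
    · obtain ⟨h1, h2⟩ := h
      exact ⟨h1.symm, by omega⟩
  loopless := by
    refine ⟨?_⟩; rintro (a | ⟨x, i⟩) h <;> simp only [gAdj] at h
    · exact D.G.irrefl h
    · omega

@[simp] lemma bigG_adj_inl_inl {a b : D.V} :
    (bigG D).Adj (.inl a) (.inl b) ↔ D.G.Adj a b := Iff.rfl

@[simp] lemma bigG_adj_inl_inr {a : D.V} {x : D.Leaf} {i : Fin 6} :
    (bigG D).Adj (.inl a) (.inr (x, i)) ↔ (a = x.1 ∧ (i.val = 0 ∨ i.val = 1)) := Iff.rfl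

@[simp] lemma bigG_adj_inr_inl {a : D.V} {x : D.Leaf} {i : Fin 6} :
    (bigG D).Adj (.inr (x, i)) (.inl a) ↔ (a = x.1 ∧ (i.val = 0 ∨ i.val = 1)) := Iff.rfl

@[simp] lemma bigG_adj_inr_inr {x y : D.Leaf} {i j : Fin 6} :
    (bigG D).Adj (.inr (x, i)) (.inr (y, j)) ↔ (x = y ∧
      (j.val = 2 * i.val + 2 ∨ j.val = 2 * i.val + 3 ∨
       i.val = 2 * j.val + 2 ∨ i.val = 2 * j.val + 3)) := Iff.rfl

noncomputable instance : DecidableRel (bigG D).Adj := Classical.decRel _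

noncomputable instance : DecidableEq (bigV D) := Classical.decEq _

lemma nf_leaf (x : D.Leaf) (k : Fin 6) (hk : 2 ≤ k.val) :
    (bigG D).neighborFinset (.inr (x, k)) =
      ({Sum.inr (x, (⟨k.val / 2 - 1, by omega⟩ : Fin 6))} : Finset (bigV D)) := by
  ext w
  rcases w with a | ⟨y, j⟩
  · simp only [SimpleGraph.mem_neighborFinset, bigG_adj_inr_inl, Finset.mem_singleton]
    constructor
    · rintro ⟨-, h⟩; omega
    · rintro ⟨⟩
  · simp only [SimpleGraph.mem_neighborFinset, bigG_adj_inr_inr, Finset.mem_singleton,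
      Sum.inr.injEq, Prod.mk.injEq, Fin.ext_iff]
    constructor
    · rintro ⟨rfl, h⟩
      exact ⟨rfl, by omega⟩
    · rintro ⟨rfl, h⟩
      refine ⟨rfl, by omega⟩

lemma deg_leaf (x : D.Leaf) (k : Fin 6) (hk : 2 ≤ k.val) :
    (bigG D).degree (.inr (x, k)) = 1 := by
  rw [← SimpleGraph.card_neighborFinset_eq_degree, nf_leaf D x k hk,
    Finset.card_singleton]

lemma nf_parent (x : D.Leaf) (c : Fin 6) (hc : c.val ≤ 1) :
    (bigG D).neighborFinset (.inr (x, c)) =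
      ({Sum.inl x.1, Sum.inr (x, (⟨2 * c.val + 2, by omega⟩ : Fin 6)),
        Sum.inr (x, (⟨2 * c.val + 3, by omega⟩ : Fin 6))} : Finset (bigV D)) := by
  ext w
  rcases w with a | ⟨y, j⟩
  · simp only [SimpleGraph.mem_neighborFinset, bigG_adj_inr_inl, Finset.mem_insert,
      Finset.mem_singleton, Sum.inl.injEq, reduceCtorEq, or_false]
    constructor
    · rintro ⟨rfl, -⟩; rfl
    · rintro rfl; exact ⟨rfl, by omega⟩
  · simp only [SimpleGraph.mem_neighborFinset, bigG_adj_inr_inr, Finset.mem_insert,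
      Finset.mem_singleton, Sum.inr.injEq, Prod.mk.injEq, Fin.ext_iff, reduceCtorEq,
      false_or]
    constructor
    · rintro ⟨rfl, h⟩
      have hj : j.val = 2 * c.val + 2 ∨ j.val = 2 * c.val + 3 := by omega
      exact hj.imp (fun h2 => ⟨rfl, h2⟩) (fun h2 => ⟨rfl, h2⟩)
    · rintro (⟨rfl, h⟩ | ⟨rfl, h⟩)
      · constructor
        · rfl
        · omega
      · constructor
        · rfl
        · omega

lemma deg_parent (x : D.Leaf) (c : Fin 6) (hc : c.val ≤ 1) :
    (bigG D).degree (.inr (x, c)) = 3 := by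
  rw [← SimpleGraph.card_neighborFinset_eq_degree, nf_parent D x c hc]
  rw [Finset.card_insert_of_notMem (by simp [Fin.ext_iff]),
    Finset.card_insert_of_notMem (by simp [Fin.ext_iff] <;> omega), Finset.card_singleton]

lemma nf_inl_deg3 (a : D.V) (h : D.G.degree a ≠ 1) :
    (bigG D).neighborFinset (.inl a) = (D.G.neighborFinset a).image Sum.inl := by
  ext w
  rcases w with b | ⟨y, j⟩
  · simp [SimpleGraph.mem_neighborFinset, D.G.adj_comm a b]
  · simp only [SimpleGraph.mem_neighborFinset, bigG_adj_inl_inr, Finset.mem_image,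
      reduceCtorEq, and_false, exists_false, iff_false, not_and]
    rintro rfl
    exact absurd y.2 h

lemma nf_inl_leaf (x : D.Leaf) :
    (bigG D).neighborFinset (.inl x.1) = (D.G.neighborFinset x.1).image Sum.inl
      ∪ ({Sum.inr (x, (⟨0, by omega⟩ : Fin 6)), Sum.inr (x, (⟨1, by omega⟩ : Fin 6))} : Finset (bigV D)) := by
  ext w
  rcases w with b | ⟨y, j⟩
  · simp [SimpleGraph.mem_neighborFinset, D.G.adj_comm x.1 b]
  · simp only [SimpleGraph.mem_neighborFinset, bigG_adj_inl_inr, Finset.mem_union,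
      Finset.mem_image, reduceCtorEq, and_false, exists_false, false_or,
      Finset.mem_insert, Finset.mem_singleton, Sum.inr.injEq, Prod.mk.injEq, Fin.ext_iff]
    constructor
    · rintro ⟨h1, h2⟩
      have : y = x := Subtype.ext h1.symm
      subst this
      rcases h2 with h2 | h2
      · exact Or.inl ⟨rfl, by omega⟩
      · exact Or.inr ⟨rfl, by omega⟩
    · rintro (⟨rfl, h⟩ | ⟨rfl, h⟩) <;> exact ⟨rfl, by omega⟩

lemma deg_inl (a : D.V) : (bigG D).degree (.inl a) = 3 := by
  rcases D.subcubic a with h | h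
  · rw [← SimpleGraph.card_neighborFinset_eq_degree, nf_inl_leaf D ⟨a, h⟩,
      Finset.card_union_of_disjoint (by simp [Finset.disjoint_left])]
    rw [Finset.card_image_of_injective _ Sum.inl_injective,
      SimpleGraph.card_neighborFinset_eq_degree, h]
    rw [Finset.card_insert_of_notMem (by simp [Fin.ext_iff]), Finset.card_singleton]
  · rw [← SimpleGraph.card_neighborFinset_eq_degree, nf_inl_deg3 D a (by omega),
      Finset.card_image_of_injective _ Sum.inl_injective,
      SimpleGraph.card_neighborFinset_eq_degree, h]
lemma deg_all (w : bigV D) : (bigG D).degree w = 1 ∨ (bigG D).degree w = 3 := by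
  rcases w with a | ⟨x, i⟩
  · exact Or.inr (deg_inl D a)
  · by_cases hi : i.val ≤ 1
    · exact Or.inr (deg_parent D x i hi)
    · exact Or.inl (deg_leaf D x i (by omega))

/-- The leaf map for the enlarged decomposition. -/
noncomputable def bigL (p : Fin 4 × n) : {w : bigV D // (bigG D).degree w = 1} :=
  ⟨.inr (D.L p.2, ⟨p.1.val + 2, by omega⟩), deg_leaf D _ _ (by simpa using Nat.le_add_left 2 p.1.val)⟩

lemma bigL_bij : Function.Bijective (bigL D) := by
  constructor
  · rintro ⟨k, x⟩ ⟨k', x'⟩ h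
    simp only [bigL, Subtype.mk.injEq, Sum.inr.injEq, Prod.mk.injEq, Fin.mk.injEq] at h
    obtain ⟨h1, h2⟩ := h
    have : x = x' := D.L.injective h1
    have : k = k' := by
      apply Fin.ext; omega
    exact Prod.ext ‹k = k'› ‹x = x'›
  · rintro ⟨w, hw⟩
    rcases w with a | ⟨x, i⟩
    · exact absurd (deg_inl D a) (by omega)
    · by_cases hi : i.val ≤ 1
      · exact absurd (deg_parent D x i hi) (by omega)
      · refine ⟨(⟨i.val - 2, by omega⟩, D.L.symm x), ?_⟩
        simp only [bigL, Subtype.mk.injEq, Sum.inr.injEq, Prod.mk.injEq]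
        exact ⟨D.L.apply_symm_apply x, Fin.ext (by simp; omega)⟩

def homInl : D.G →g bigG D := ⟨Sum.inl, fun {a b} h => h⟩

lemma reach_to_base (x : D.Leaf) (i : Fin 6) :
    (bigG D).Reachable (.inr (x, i)) (.inl x.1) := by
  have hlt := i.isLt
  by_cases hi : i.val ≤ 1
  · exact SimpleGraph.Adj.reachable (by exact ⟨rfl, by omega⟩)
  · have h1 : (bigG D).Adj (.inr (x, i)) (.inr (x, ⟨i.val / 2 - 1, by omega⟩)) := by
      exact ⟨rfl, by simp; omega⟩
    have h2 : (bigG D).Adj (.inr (x, (⟨i.val / 2 - 1, by omega⟩ : Fin 6))) (.inl x.1) := by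
      exact ⟨rfl, by simp; omega⟩
    exact h1.reachable.trans h2.reachable

lemma big_connected : (bigG D).Connected := by
  have hne : Nonempty D.V := D.isTree.isConnected.nonempty
  rw [SimpleGraph.connected_iff]
  refine ⟨?_, ⟨.inl hne.some⟩⟩
  have hbase : ∀ w : bigV D, ∃ a : D.V, (bigG D).Reachable w (.inl a) := by
    rintro (a | ⟨x, i⟩)
    · exact ⟨a, SimpleGraph.Reachable.refl _⟩
    · exact ⟨x.1, reach_to_base D x i⟩
  intro u v
  obtain ⟨a, hu⟩ := hbase u
  obtain ⟨b, hv⟩ := hbase v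
  have : D.G.Reachable a b := D.isTree.isConnected.preconnected a b
  exact hu.trans ((this.map (homInl D)).trans hv.symm)
/-- base projection. -/
def vbase : bigV D → D.V := Sum.elim id (fun p => p.1.1)

def Pold (a b : D.V) : Set (bigV D) :=
  {w | (D.G.deleteEdges {s(a, b)}).Reachable a (vbase D w)}

lemma closed_old (a b : D.V) :
    ∀ u w, ((bigG D).deleteEdges {s(Sum.inl a, Sum.inl b)}).Adj u w →
      u ∈ Pold D a b → w ∈ Pold D a b := by
  intro u w hadj hu
  rw [SimpleGraph.deleteEdges_adj] at hadj
  obtain ⟨h, hne⟩ := hadj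
  simp only [Set.mem_singleton_iff] at hne
  rcases u with c | ⟨x, i⟩ <;> rcases w with d | ⟨y, j⟩
  · have hsym : s(c, d) ≠ s(a, b) := by
      intro hcd
      apply hne
      rw [Sym2.eq_iff] at hcd ⊢
      rcases hcd with ⟨rfl, rfl⟩ | ⟨rfl, rfl⟩
      · exact Or.inl ⟨rfl, rfl⟩
      · exact Or.inr ⟨rfl, rfl⟩
    refine hu.trans (SimpleGraph.Adj.reachable ?_)
    rw [SimpleGraph.deleteEdges_adj]
    exact ⟨h, by simpa [vbase] using hsym⟩
  · obtain ⟨h1, -⟩ := h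
    show (D.G.deleteEdges {s(a, b)}).Reachable a y.1
    rw [← h1]
    exact hu
  · obtain ⟨h1, -⟩ := h
    show (D.G.deleteEdges {s(a, b)}).Reachable a d
    rw [h1]
    exact hu
  · obtain ⟨h1, -⟩ := h
    show (D.G.deleteEdges {s(a, b)}).Reachable a y.1
    rw [← h1]
    exact hu

lemma not_reach_old {a b : D.V} (hab : D.G.Adj a b) :
    ¬ ((bigG D).deleteEdges {s(Sum.inl a, Sum.inl b)}).Reachable (.inl a) (.inl b) := by
  intro h
  have : Sum.inl b ∈ Pold D a b :=
    reach_closed (closed_old D a b) h (SimpleGraph.Reachable.refl _)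
  exact D.bridge hab this

def Pgad (x : D.Leaf) (c : Fin 6) : Set (bigV D) :=
  {w | ∃ j : Fin 6, w = .inr (x, j) ∧
    (j.val = c.val ∨ j.val = 2 * c.val + 2 ∨ j.val = 2 * c.val + 3)}

lemma closed_gad (x : D.Leaf) (c : Fin 6) (hc : c.val ≤ 1) :
    ∀ u w, ((bigG D).deleteEdges {s(Sum.inr (x, c), Sum.inl x.1)}).Adj u w →
      u ∈ Pgad D x c → w ∈ Pgad D x c := by
  intro u w hadj hu
  rw [SimpleGraph.deleteEdges_adj] at hadj
  obtain ⟨h, hne⟩ := hadj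
  simp only [Set.mem_singleton_iff] at hne
  obtain ⟨j, rfl, hj⟩ := hu
  rcases w with d | ⟨y, j'⟩
  · obtain ⟨rfl, hj2⟩ := h
    exfalso
    apply hne
    have : j = c := by apply Fin.ext; omega
    subst this
    rfl
  · obtain ⟨rfl, hra⟩ := h
    exact ⟨j', rfl, by omega⟩

lemma not_reach_gad (x : D.Leaf) (c : Fin 6) (hc : c.val ≤ 1) :
    ¬ ((bigG D).deleteEdges {s(Sum.inr (x, c), Sum.inl x.1)}).Reachable
      (.inr (x, c)) (.inl x.1) := by
  intro h
  have : Sum.inl x.1 ∈ Pgad D x c :=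
    reach_closed (closed_gad D x c hc) h ⟨c, rfl, Or.inl rfl⟩
  obtain ⟨j, hj, -⟩ := this
  cases hj

lemma closed_leafedge (x : D.Leaf) (k : Fin 6) (hk : 2 ≤ k.val) :
    ∀ u w, ((bigG D).deleteEdges
        {s(Sum.inr (x, k), Sum.inr (x, ⟨k.val / 2 - 1, by omega⟩))}).Adj u w →
      u ∈ ({Sum.inr (x, k)} : Set (bigV D)) → w ∈ ({Sum.inr (x, k)} : Set (bigV D)) := by
  intro u w hadj hu
  rw [SimpleGraph.deleteEdges_adj] at hadj
  obtain ⟨h, hne⟩ := hadj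
  simp only [Set.mem_singleton_iff] at hne hu ⊢
  subst hu
  rcases w with d | ⟨y, j⟩
  · obtain ⟨-, hj2⟩ := h
    omega
  · obtain ⟨rfl, hra⟩ := h
    exfalso
    apply hne
    have : j = (⟨k.val / 2 - 1, by omega⟩ : Fin 6) := by apply Fin.ext; simp; omega
    subst this
    rfl

lemma not_reach_leafedge (x : D.Leaf) (k : Fin 6) (hk : 2 ≤ k.val) :
    ¬ ((bigG D).deleteEdges
        {s(Sum.inr (x, k), Sum.inr (x, ⟨k.val / 2 - 1, by omega⟩))}).Reachable
      (.inr (x, k)) (.inr (x, ⟨k.val / 2 - 1, by omega⟩)) := by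
  intro h
  have := reach_closed (closed_leafedge D x k hk) h rfl
  simp only [Set.mem_singleton_iff, Sum.inr.injEq, Prod.mk.injEq] at this
  obtain ⟨-, h2⟩ := this
  rw [Fin.ext_iff] at h2
  simp at h2
  omega
lemma big_acyclic : (bigG D).IsAcyclic := by
  rw [SimpleGraph.isAcyclic_iff_forall_adj_isBridge]
  intro u w hadj
  rw [SimpleGraph.isBridge_iff]
  rcases u with a | ⟨x, i⟩ <;> rcases w with b | ⟨y, j⟩
  · exact not_reach_old D hadj
  · -- inl a ~ inr (y, j) : a = y.1, j ≤ 1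
    obtain ⟨rfl, hj⟩ := hadj
    have hswap : s(Sum.inl y.1, Sum.inr (y, j)) = s(Sum.inr (y, j), Sum.inl y.1) :=
      Sym2.eq_swap
    rw [hswap]
    intro h
    exact not_reach_gad D y j (by omega) h.symm
  · obtain ⟨rfl, hi⟩ := hadj
    exact not_reach_gad D x i (by omega)
  · -- inr (x,i) ~ inr (y,j)
    obtain ⟨rfl, harith⟩ := hadj
    by_cases hij : j.val = 2 * i.val + 2 ∨ j.val = 2 * i.val + 3
    · -- j is the leaf, i its parent
      have hj2 : 2 ≤ j.val := by omega
      have hi' : i = (⟨j.val / 2 - 1, by omega⟩ : Fin 6) := by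
        apply Fin.ext; simp; omega
      have hswap : s(Sum.inr (x, i), (Sum.inr (x, j) : bigV D)) =
          s(Sum.inr (x, j), Sum.inr (x, i)) := Sym2.eq_swap
      rw [hswap, hi']
      intro h
      exact not_reach_leafedge D x j hj2 h.symm
    · -- i is the leaf
      have hi2 : 2 ≤ i.val := by omega
      have hj' : j = (⟨i.val / 2 - 1, by omega⟩ : Fin 6) := by
        apply Fin.ext; simp; omega
      rw [hj']
      exact not_reach_leafedge D x i hi2

lemma big_isTree : (bigG D).IsTree := ⟨big_connected D, big_acyclic D⟩

/-- The enlarged branch decomposition. -/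
noncomputable def bigD : BranchDecomp (Fin 4 × n) where
  V := bigV D
  G := bigG D
  isTree := big_isTree D
  subcubic := deg_all D
  L := Equiv.ofBijective (bigL D) (bigL_bij D)
def homDel (a b : D.V) : (D.G.deleteEdges {s(a, b)}) →g
    ((bigG D).deleteEdges {s(Sum.inl a, Sum.inl b)}) where
  toFun := Sum.inl
  map_rel' := by
    intro u v h
    rw [SimpleGraph.deleteEdges_adj] at h ⊢
    refine ⟨h.1, ?_⟩
    simp only [Set.mem_singleton_iff, Sym2.eq_iff] at h ⊢
    rintro (⟨h1, h2⟩ | ⟨h1, h2⟩)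
    · exact h.2 (Or.inl ⟨Sum.inl.inj h1, Sum.inl.inj h2⟩)
    · exact h.2 (Or.inr ⟨Sum.inl.inj h1, Sum.inl.inj h2⟩)

lemma side_old (a b : D.V) :
    (bigD D).side (.inl a) (.inl b) = {p : Fin 4 × n | p.2 ∈ D.side a b} := by
  ext ⟨k, x⟩
  simp only [BranchDecomp.side, Set.mem_setOf_eq]
  constructor
  · intro h
    exact reach_closed (closed_old D a b) h (SimpleGraph.Reachable.refl _)
  · intro h
    have hbase : ((bigG D).deleteEdges {s(Sum.inl a, Sum.inl b)}).Reachable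
        (.inl a) (.inl (D.L x).1) := h.map (homDel D a b)
    have step1 : ((bigG D).deleteEdges {s(Sum.inl a, Sum.inl b)}).Adj
        (.inl (D.L x).1) (.inr (D.L x, (⟨k.val / 2, by omega⟩ : Fin 6))) := by
      rw [SimpleGraph.deleteEdges_adj]
      refine ⟨⟨rfl, by simp; omega⟩, by simp [Sym2.eq_iff]⟩
    have step2 : ((bigG D).deleteEdges {s(Sum.inl a, Sum.inl b)}).Adj
        (.inr (D.L x, (⟨k.val / 2, by omega⟩ : Fin 6)))
        (.inr (D.L x, (⟨k.val + 2, by omega⟩ : Fin 6))) := by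
      rw [SimpleGraph.deleteEdges_adj]
      refine ⟨⟨rfl, by simp; omega⟩, by simp [Sym2.eq_iff]⟩
    exact (hbase.trans step1.reachable).trans step2.reachable

lemma side_gad (x : D.Leaf) (c : Fin 6) (hc : c.val ≤ 1) :
    (bigD D).side (.inr (x, c)) (.inl x.1) =
      {p : Fin 4 × n | p.2 = D.L.symm x ∧
        (p.1.val = 2 * c.val ∨ p.1.val = 2 * c.val + 1)} := by
  ext ⟨k, z⟩
  simp only [BranchDecomp.side, Set.mem_setOf_eq]
  constructor
  · intro h
    have hm := reach_closed (closed_gad D x c hc) h ⟨c, rfl, Or.inl rfl⟩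
    obtain ⟨j, hj, harith⟩ := hm
    have hj' : (Sum.inr (D.L z, (⟨k.val + 2, by omega⟩ : Fin 6)) : bigV D)
        = Sum.inr (x, j) := hj
    rw [Sum.inr.injEq, Prod.mk.injEq] at hj'
    obtain ⟨h1, h2⟩ := hj'
    have hz : z = D.L.symm x := by rw [← h1]; simp
    have hk : (⟨k.val + 2, by omega⟩ : Fin 6).val = j.val := by rw [h2]
    simp only [Fin.val_mk] at hk
    exact ⟨hz, by omega⟩
  · rintro ⟨rfl, hk⟩
    have hleaf : ((bigD D).L (k, D.L.symm x)).1
        = .inr (x, (⟨k.val + 2, by omega⟩ : Fin 6)) := by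
      show (bigL D (k, D.L.symm x)).1 = _
      simp [bigL]
    rw [hleaf]
    refine SimpleGraph.Adj.reachable ?_
    refine SimpleGraph.deleteEdges_adj.mpr ?_
    refine ⟨⟨rfl, by simp; omega⟩, by show ¬ (s(Sum.inr (x, c), Sum.inr (x, (⟨k.val + 2, by omega⟩ : Fin 6))) : Sym2 (bigV D)) ∈ ({s(Sum.inr (x, c), Sum.inl x.1)} : Set (Sym2 (bigV D))); simp [Sym2.eq_iff]⟩

lemma side_leafedge (x : D.Leaf) (i : Fin 6) (hi : 2 ≤ i.val) :
    (bigD D).side (.inr (x, i)) (.inr (x, ⟨i.val / 2 - 1, by omega⟩)) =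
      {((⟨i.val - 2, by omega⟩ : Fin 4), D.L.symm x)} := by
  ext ⟨k, z⟩
  simp only [BranchDecomp.side, Set.mem_setOf_eq, Set.mem_singleton_iff, Prod.mk.injEq]
  constructor
  · intro h
    have hm := reach_closed (closed_leafedge D x i hi) h rfl
    replace hm := Set.mem_singleton_iff.mp hm
    have hm' : (Sum.inr (D.L z, (⟨k.val + 2, by omega⟩ : Fin 6)) : bigV D)
        = Sum.inr (x, i) := hm
    rw [Sum.inr.injEq, Prod.mk.injEq] at hm'
    obtain ⟨h1, h2⟩ := hm'
    constructor
    · apply Fin.ext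
      have := congrArg Fin.val h2
      simp at this
      show k.val = i.val - 2
      omega
    · rw [← h1]; simp
  · rintro ⟨rfl, rfl⟩
    have hleaf : ((bigD D).L ((⟨i.val - 2, by omega⟩ : Fin 4), D.L.symm x)).1
        = .inr (x, i) := by
      show (bigL D ((⟨i.val - 2, by omega⟩ : Fin 4), D.L.symm x)).1 = _
      simp only [bigL]
      congr 1
      refine Prod.ext (by simp) ?_
      apply Fin.ext
      simp
      omega
    rw [hleaf]
    exact SimpleGraph.Reachable.refl _
lemma BranchDecomp.lam_side_le_width {E : Type*} (D : BranchDecomp E) (lam : Set E → ℕ)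
    {u v : D.V} (h : D.G.Adj u v) : lam (D.side u v) ≤ D.width lam := by
  unfold BranchDecomp.width
  exact Finset.le_sup (f := fun p : D.V × D.V => lam (D.side p.1 p.2)) (b := (u, v))
    (by rw [Finset.mem_filter]; exact ⟨Finset.mem_univ (u, v), h⟩)

set_option maxHeartbeats 800000 in
lemma big_width {m F : Type*} [Fintype m] [Field F] (α β γ δ : F) (hab : α ≠ β)
    (A : Matrix m n F) (x₀ : n) (ha1 : 1 ≤ D.width (matLam A)) :
    (bigD D).width (matLam (dPlus α β γ δ A)) ≤ D.width (matLam A) + 1 := by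
  have hsmall : ∀ (X : Set (Fin 4 × n)) (x1 : n), X ⊆ {p | p.2 = x1} →
      matLam (dPlus α β γ δ A) X ≤ D.width (matLam A) + 1 := by
    intro X x1 hX
    have h1 := (matLam_le_colRank (dPlus α β γ δ A) X).trans
      (colRank_small α β γ δ A x1 hX)
    omega
  have hsmallc : ∀ (X : Set (Fin 4 × n)) (x1 : n), X ⊆ {p | p.2 = x1} →
      matLam (dPlus α β γ δ A) Xᶜ ≤ D.width (matLam A) + 1 := by
    intro X x1 hX
    rw [matLam_compl]
    exact hsmall X x1 hX
  apply Finset.sup_le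
  rintro ⟨u, w⟩ hmem
  rw [Finset.mem_filter] at hmem
  obtain ⟨-, hadj⟩ := hmem
  rcases u with c | ⟨x, i⟩ <;> rcases w with d | ⟨y, j⟩
  · show matLam (dPlus α β γ δ A) ((bigD D).side (.inl c) (.inl d)) ≤ _
    rw [side_old D c d]
    refine le_trans (matLam_hat α β γ δ hab A x₀ (D.side c d)) ?_
    have hle := D.lam_side_le_width (matLam A) (show D.G.Adj c d from hadj)
    omega
  · obtain ⟨heq, hj⟩ := hadj
    subst heq
    show matLam (dPlus α β γ δ A) ((bigD D).side (.inl y.1) (.inr (y, j))) ≤ _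
    rw [(bigD D).side_compl (show (bigD D).G.Adj (.inr (y, j)) (.inl y.1)
      from ⟨rfl, hj⟩)]
    rw [side_gad D y j (by omega)]
    exact hsmallc _ (D.L.symm y) (fun p hp => hp.1)
  · obtain ⟨heq, hi⟩ := hadj
    subst heq
    show matLam (dPlus α β γ δ A) ((bigD D).side (.inr (x, i)) (.inl x.1)) ≤ _
    rw [side_gad D x i (by omega)]
    exact hsmall _ (D.L.symm x) (fun p hp => hp.1)
  · obtain ⟨heq, harith⟩ := hadj
    subst heq
    by_cases hc : j.val = 2 * i.val + 2 ∨ j.val = 2 * i.val + 3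
    · have hj2 : 2 ≤ j.val := by omega
      have hi' : i = (⟨j.val / 2 - 1, by omega⟩ : Fin 6) := by
        apply Fin.ext
        show i.val = j.val / 2 - 1
        omega
      subst hi'
      show matLam (dPlus α β γ δ A) ((bigD D).side
        (.inr (x, ⟨j.val / 2 - 1, by omega⟩)) (.inr (x, j))) ≤ _
      rw [(bigD D).side_compl (show (bigD D).G.Adj (.inr (x, j))
        (.inr (x, (⟨j.val / 2 - 1, by omega⟩ : Fin 6))) from ⟨rfl, by simp; omega⟩)]
      rw [side_leafedge D x j hj2]
      refine hsmallc _ (D.L.symm x) ?_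
      rintro p rfl
      rfl
    · have hi2 : 2 ≤ i.val := by omega
      have hj' : j = (⟨i.val / 2 - 1, by omega⟩ : Fin 6) := by
        apply Fin.ext
        show j.val = i.val / 2 - 1
        omega
      subst hj'
      show matLam (dPlus α β γ δ A) ((bigD D).side (.inr (x, i))
        (.inr (x, ⟨i.val / 2 - 1, by omega⟩))) ≤ _
      rw [side_leafedge D x i hi2]
      refine hsmall _ (D.L.symm x) ?_
      rintro p rfl
      rfl
end Construct

theorem stmt19 {m n F : Type*} [Fintype m] [Field F]
    (α β γ δ : F) (hd : [α, β, γ, δ].Pairwise (· ≠ ·))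
    (A : Matrix m n F) (a : ℕ) (ha : 1 ≤ a) (hbw : matBW A = a) :
    matBW (dPlus α β γ δ A) ≤ a + 1 := by
  have hab : α ≠ β := (List.pairwise_cons.mp hd).1 β (by simp)
  by_cases hcard : Nat.card (Fin 4 × n) ≤ 1
  · rw [matBW, branchWidth, if_pos hcard]
    omega
  have h2 : ¬ Nat.card n ≤ 1 := by
    intro h
    rw [matBW, branchWidth, if_pos h] at hbw
    omega
  have hnon : Nonempty n := by
    by_contra h
    rw [not_nonempty_iff] at h
    exact h2 (by simp [Nat.card_of_isEmpty])
  obtain ⟨x₀⟩ := hnon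
  rw [matBW, branchWidth, if_neg h2] at hbw
  have hne : {w | ∃ D : BranchDecomp n, D.width (matLam A) = w}.Nonempty := by
    by_contra h
    rw [Set.not_nonempty_iff_eq_empty] at h
    rw [h, Nat.sInf_empty] at hbw
    omega
  have hmem := Nat.sInf_mem hne
  rw [hbw] at hmem
  obtain ⟨D, hD⟩ := hmem
  rw [matBW, branchWidth, if_neg hcard]
  have hW := big_width D α β γ δ hab A x₀ (by rw [hD]; exact ha)
  rw [hD] at hW
  exact le_trans (Nat.sInf_le ⟨bigD D, rfl⟩) hW
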